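/- Let Γ be a subgroup of SL(2,ℝ) such that: (i) Γ is discrete (as a topological subspace of SL(2,ℝ)); (ii) every γ ∈ Γ with γ ≠ 1 acts on ℍ without fixed points (in particular −1 ∉ Γ); and (iii) the quotient topological space of ℍ by the Γ-action is compact. Let ρ : Γ → SL(2,ℝ) be a group homomorphism. If f₁, f₂ : ℍ → ℍ are holomorphic, nonconstant, and ρ-equivariant — i.e. f_i(γ • τ) = ρ(γ) • f_i(τ) for all γ ∈ Γ and τ ∈ ℍ, for i = 1,2 — then f₁ = f₂. (This is the uniqueness theorem for nonconstant equivariant holomorphic maps to the hyperbolic plane, in the case of a smooth projective curve C = ℍ/Γ of genus at least two; it says that a monodromy representation determines at most one branched hyperbolic structure.) -/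

import Mathlib

open UpperHalfPlane Matrix MatrixGroups Metric intervalIntegral

namespace UniqHelp

lemma isOpen_H' : IsOpen {z : ℂ | 0 < z.im} := isOpen_lt continuous_const Complex.continuous_im

lemma preconn_H' : IsPreconnected {z : ℂ | 0 < z.im} :=
  (convex_halfSpace_im_gt (r := 0)).isPreconnected

/-- AM-GM with a weight. -/
lemma amgm {t A B : ℝ} (ht : 0 < t) :
    2 * (A * B) ≤ t * A ^ 2 + B ^ 2 / t := by
  rw [← sub_nonneg]
  have h : t * A ^ 2 + B ^ 2 / t - 2 * (A * B) = (t * A - B) ^ 2 / t := by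
    field_simp; ring
  rw [h]; positivity

lemma eq_ofReal_abs {q : ℂ} (h : q.re = ‖q‖) : q = ((‖q‖ : ℝ) : ℂ) := by
  have hsq := Complex.sq_norm q
  rw [Complex.normSq_apply] at hsq
  rw [← h] at hsq
  have him : q.im = 0 := by
    have : q.im * q.im = 0 := by nlinarith
    exact mul_self_eq_zero.mp this
  apply Complex.ext
  · simpa using h
  · simpa using him

/-- Mean value property over circles, from the Cauchy integral formula. -/
lemma circle_mean {f : ℂ → ℂ} {c : ℂ} {R : ℝ} (hR : 0 < R)
    (hf : DifferentiableOn ℂ f {z : ℂ | 0 < z.im})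
    (hsub : closedBall c R ⊆ {z : ℂ | 0 < z.im}) :
    (∫ θ in (0:ℝ)..(2*Real.pi), f (circleMap c R θ)) = ((2*Real.pi : ℝ) : ℂ) * f c := by
  have hball : closure (ball c R) = closedBall c R := closure_ball c hR.ne'
  have hd : DiffContOnCl ℂ f (ball c R) :=
    DifferentiableOn.diffContOnCl (by rw [hball]; exact hf.mono hsub)
  have hc := hd.circleIntegral_sub_inv_smul (mem_ball_self hR)
  have h2 : (∮ z in C(c, R), (z - c)⁻¹ • f z)
      = Complex.I * ∫ θ in (0:ℝ)..(2*Real.pi), f (circleMap c R θ) := by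
    rw [circleIntegral, ← intervalIntegral.integral_const_mul]
    refine intervalIntegral.integral_congr fun θ _ => ?_
    have hne : circleMap 0 R θ ≠ 0 := circleMap_ne_center hR.ne'
    simp only [deriv_circleMap, circleMap_sub_center, smul_eq_mul]
    field_simp
  rw [h2] at hc
  have h3 : Complex.I * ∫ θ in (0:ℝ)..(2*Real.pi), f (circleMap c R θ)
      = Complex.I * (((2*Real.pi : ℝ) : ℂ) * f c) := by
    rw [hc]; simp only [smul_eq_mul]; push_cast; ring
  exact mul_left_cancel₀ Complex.I_ne_zero h3

/-- A nonnegative continuous periodic function with zero integral over a period vanishes. -/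
lemma zero_of_integral_zero {h : ℝ → ℝ} (hc : Continuous h) (hnn : ∀ θ, 0 ≤ h θ)
    (hper : Function.Periodic h (2*Real.pi))
    (hint : (∫ θ in (0:ℝ)..(2*Real.pi), h θ) = 0) : ∀ θ, h θ = 0 := by
  by_contra hne
  push_neg at hne
  obtain ⟨θ₀, hθ₀⟩ := hne
  have hpos : 0 < h θ₀ := (hnn θ₀).lt_of_ne (Ne.symm hθ₀)
  obtain ⟨θ₁, hmem, heq⟩ := hper.exists_mem_Ico₀ Real.two_pi_pos θ₀
  rw [heq] at hpos
  set ε := h θ₁ / 2 with hε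
  have hεpos : 0 < ε := by positivity
  have hopen : {y | ε < h y} ∈ nhds θ₁ :=
    (isOpen_lt continuous_const hc).mem_nhds (by simp only [Set.mem_setOf_eq]; linarith)
  obtain ⟨δ, hδpos, hδ⟩ := Metric.mem_nhds_iff.mp hopen
  set d := min (θ₁ + δ/2) (2*Real.pi) with hd
  have hcd : θ₁ < d := lt_min (by linarith) hmem.2
  have hd2 : d ≤ 2*Real.pi := min_le_right _ _
  have hsub : ∀ y ∈ Set.Icc θ₁ d, ε ≤ h y := by
    intro y hy
    have : y ∈ Metric.ball θ₁ δ := by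
      rw [Metric.mem_ball, Real.dist_eq, abs_lt]
      have h1 := hy.1
      have : y ≤ θ₁ + δ/2 := le_trans hy.2 (min_le_left _ _)
      constructor <;> linarith
    exact (hδ this).le
  have hint1 : IntervalIntegrable h MeasureTheory.volume 0 θ₁ := hc.intervalIntegrable _ _
  have hint2 : IntervalIntegrable h MeasureTheory.volume θ₁ d := hc.intervalIntegrable _ _
  have hint3 : IntervalIntegrable h MeasureTheory.volume d (2*Real.pi) := hc.intervalIntegrable _ _
  have hsplit : (∫ θ in (0:ℝ)..(2*Real.pi), h θ)
      = (∫ θ in (0:ℝ)..θ₁, h θ) + (∫ θ in θ₁..d, h θ) + (∫ θ in d..(2*Real.pi), h θ) := by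
    rw [integral_add_adjacent_intervals hint1 hint2,
      integral_add_adjacent_intervals (hint1.trans hint2) hint3]
  have h1 : 0 ≤ ∫ θ in (0:ℝ)..θ₁, h θ :=
    intervalIntegral.integral_nonneg hmem.1 (fun x _ => hnn x)
  have h3 : 0 ≤ ∫ θ in d..(2*Real.pi), h θ :=
    intervalIntegral.integral_nonneg hd2 (fun x _ => hnn x)
  have h2 : ε * (d - θ₁) ≤ ∫ θ in θ₁..d, h θ := by
    have := intervalIntegral.integral_mono_on hcd.le (intervalIntegrable_const) hint2 hsub
    rw [intervalIntegral.integral_const, smul_eq_mul] at this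
    linarith
  have : 0 < ε * (d - θ₁) := mul_pos hεpos (by linarith)
  linarith [hsplit ▸ hint]

/-- A holomorphic function on the upper half-plane with real values is constant. -/
lemma const_of_real {g : ℂ → ℂ} (hg : DifferentiableOn ℂ g {z : ℂ | 0 < z.im})
    (hreal : ∀ z ∈ {z : ℂ | 0 < z.im}, (g z).im = 0) :
    ∀ z ∈ {z : ℂ | 0 < z.im}, ∀ w ∈ {z : ℂ | 0 < z.im}, g z = g w := by
  intro z hz w hw
  set U := {z : ℂ | 0 < z.im} with hU
  have hUopen : IsOpen U := isOpen_H'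
  have hUconn : IsPreconnected U := preconn_H'
  set h : ℂ → ℂ := fun x => Complex.exp (Complex.I * g x) with hh
  have hhd : DifferentiableOn ℂ h U := (hg.const_mul Complex.I).cexp
  have hnorm : ∀ x ∈ U, ‖h x‖ = 1 := by
    intro x hx
    rw [hh]
    simp only [Complex.norm_exp, Complex.mul_re, Complex.I_re, Complex.I_im]
    rw [hreal x hx]
    norm_num
  have hmax : IsMaxOn (norm ∘ h) U z := by
    intro x hx
    simp only [Function.comp_apply, Set.mem_setOf_eq,
      hnorm x hx, hnorm z hz, le_refl]
  have heqc := Complex.eqOn_of_isPreconnected_of_isMaxOn_norm hUconn hUopen hhd hz hmax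
  have hderiv : ∀ x ∈ U, deriv g x = 0 := by
    intro x hx
    have hgx : DifferentiableAt ℂ g x := (hg x hx).differentiableAt (hUopen.mem_nhds hx)
    have h1 : HasDerivAt h (Complex.exp (Complex.I * g x) * (Complex.I * deriv g x)) x :=
      (hgx.hasDerivAt.const_mul Complex.I).cexp
    have h2 : HasDerivAt h 0 x := by
      have hev : h =ᶠ[nhds x] fun _ => h z := by
        filter_upwards [hUopen.mem_nhds hx] with y hy
        exact heqc hy
      exact (hasDerivAt_const x (h z)).congr_of_eventuallyEq hev
    have h3 := h1.unique h2
    have hexp : Complex.exp (Complex.I * g x) ≠ 0 := Complex.exp_ne_zero _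
    have h4 : Complex.I * deriv g x = 0 := by
      rcases mul_eq_zero.mp h3 with h' | h'
      · exact absurd h' hexp
      · exact h'
    rcases mul_eq_zero.mp h4 with h' | h'
    · exact absurd h' Complex.I_ne_zero
    · exact h'
  have hgR : DifferentiableOn ℝ g U := hg.restrictScalars ℝ
  have hzero : ∀ x ∈ U, fderivWithin ℝ g U x = 0 := by
    intro x hx
    have hgx : DifferentiableAt ℂ g x := (hg x hx).differentiableAt (hUopen.mem_nhds hx)
    have hf0 : HasFDerivAt g (0 : ℂ →L[ℂ] ℂ) x := by
      have h' := hgx.hasDerivAt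
      rw [hderiv x hx] at h'
      have := h'.hasFDerivAt
      rwa [ContinuousLinearMap.toSpanSingleton_zero] at this
    have hfR : HasFDerivAt g ((0 : ℂ →L[ℂ] ℂ).restrictScalars ℝ) x := hf0.restrictScalars ℝ
    have := hfR.hasFDerivWithinAt.fderivWithin (hUopen.uniqueDiffWithinAt hx)
    rw [this]
    ext
    simp
  exact (convex_halfSpace_im_gt (r := 0)).is_const_of_fderivWithin_eq_zero hgR hzero hz hw

end UniqHelp

set_option maxHeartbeats 3000000 in
/-- Uniqueness of nonconstant equivariant holomorphic maps `ℍ → ℍ`: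
if `Γ ≤ SL(2,ℝ)` is discrete (as a subset of the space of real 2×2 matrices), acts
freely on `ℍ`, and has compact quotient, and `ρ : Γ → SL(2,ℝ)` is a homomorphism,
then any two nonconstant holomorphic `ρ`-equivariant maps `f₁, f₂ : ℍ → ℍ` coincide. -/
theorem uniqueness_of_equivariant_holomorphic_map
    (Γ : Subgroup (Matrix.SpecialLinearGroup (Fin 2) ℝ))
    (hdisc : DiscreteTopology
      {A : Matrix (Fin 2) (Fin 2) ℝ | ∃ γ : Γ, ((γ : Matrix.SpecialLinearGroup (Fin 2) ℝ) : Matrix (Fin 2) (Fin 2) ℝ) = A})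
    (hfree : ∀ γ : Γ, γ ≠ 1 → ∀ τ : UpperHalfPlane,
      (γ : Matrix.SpecialLinearGroup (Fin 2) ℝ) • τ ≠ τ)
    (hcpt : CompactSpace (Quotient (MulAction.orbitRel Γ UpperHalfPlane)))
    (ρ : Γ →* Matrix.SpecialLinearGroup (Fin 2) ℝ)
    (f₁ f₂ : UpperHalfPlane → UpperHalfPlane)
    (hol₁ : ∃ F : ℂ → ℂ, DifferentiableOn ℂ F {z : ℂ | 0 < z.im} ∧
      ∀ τ : UpperHalfPlane, F (τ : ℂ) = ((f₁ τ : UpperHalfPlane) : ℂ))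
    (hol₂ : ∃ F : ℂ → ℂ, DifferentiableOn ℂ F {z : ℂ | 0 < z.im} ∧
      ∀ τ : UpperHalfPlane, F (τ : ℂ) = ((f₂ τ : UpperHalfPlane) : ℂ))
    (hnc₁ : ∃ τ τ' : UpperHalfPlane, f₁ τ ≠ f₁ τ')
    (hnc₂ : ∃ τ τ' : UpperHalfPlane, f₂ τ ≠ f₂ τ')
    (heqv₁ : ∀ (γ : Γ) (τ : UpperHalfPlane),
      f₁ ((γ : Matrix.SpecialLinearGroup (Fin 2) ℝ) • τ) = (ρ γ) • (f₁ τ))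
    (heqv₂ : ∀ (γ : Γ) (τ : UpperHalfPlane),
      f₂ ((γ : Matrix.SpecialLinearGroup (Fin 2) ℝ) • τ) = (ρ γ) • (f₂ τ)) :
    f₁ = f₂ := by
  classical
  obtain ⟨F₁, hF₁d, hF₁⟩ := hol₁
  obtain ⟨F₂, hF₂d, hF₂⟩ := hol₂
  set U : Set ℂ := {z : ℂ | 0 < z.im} with hUdef
  have hUopen : IsOpen U := UniqHelp.isOpen_H'
  have hmemU : ∀ τ : ℍ, (τ : ℂ) ∈ U := fun τ => τ.2
  -- continuity of f₁, f₂
  have hcf₁ : Continuous (fun τ : ℍ => ((f₁ τ : ℍ) : ℂ)) := by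
    have he : (fun τ : ℍ => ((f₁ τ : ℍ) : ℂ)) = fun τ : ℍ => F₁ (τ : ℂ) := by
      funext τ; rw [hF₁ τ]
    rw [he]
    exact hF₁d.continuousOn.comp_continuous continuous_coe hmemU
  have hcf₂ : Continuous (fun τ : ℍ => ((f₂ τ : ℍ) : ℂ)) := by
    have he : (fun τ : ℍ => ((f₂ τ : ℍ) : ℂ)) = fun τ : ℍ => F₂ (τ : ℂ) := by
      funext τ; rw [hF₂ τ]
    rw [he]
    exact hF₂d.continuousOn.comp_continuous continuous_coe hmemU
  have hcont₁ : Continuous f₁ := isEmbedding_coe.continuous_iff.mpr hcf₁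
  have hcont₂ : Continuous f₂ := isEmbedding_coe.continuous_iff.mpr hcf₂
  set u : ℍ → ℝ := fun τ => dist (f₁ τ) (f₂ τ) with hu
  have hucont : Continuous u := hcont₁.dist hcont₂
  have hsetoid : ∀ x y : ℍ, (MulAction.orbitRel Γ ℍ) x y → u x = u y := by
    intro x y hxy
    rw [MulAction.orbitRel_apply] at hxy
    obtain ⟨γ, hγ⟩ := hxy
    have hγ' : ((γ : Matrix.SpecialLinearGroup (Fin 2) ℝ) • y : ℍ) = x := hγ
    rw [← hγ', hu]
    simp only []
    rw [heqv₁ γ y, heqv₂ γ y, dist_smul]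
  haveI : Nonempty (Quotient (MulAction.orbitRel Γ ℍ)) :=
    ⟨Quotient.mk _ UpperHalfPlane.I⟩
  obtain ⟨x₀, -, hx₀⟩ := isCompact_univ.exists_isMaxOn Set.univ_nonempty
    ((hucont.quotient_lift hsetoid).continuousOn)
  obtain ⟨τ₀, rfl⟩ := Quotient.exists_rep x₀
  have hmax : ∀ τ : ℍ, u τ ≤ u τ₀ := fun τ => hx₀ (Set.mem_univ (Quotient.mk _ τ))
  by_cases hM0 : u τ₀ ≤ 0
  · funext τ
    have h1 : dist (f₁ τ) (f₂ τ) ≤ 0 := le_trans (hmax τ) hM0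
    exact dist_le_zero.mp h1
  push_neg at hM0
  exfalso
  set s := Real.sinh (u τ₀ / 2) with hs
  have hspos : 0 < s := by
    rw [hs]; exact Real.sinh_pos_iff.mpr (by linarith)
  set a : ℂ → ℝ := fun z => (F₁ z).im with ha
  set b : ℂ → ℝ := fun z => (F₂ z).im with hb
  set G : ℂ → ℂ := fun z => F₁ z - F₂ z with hG
  have hGd : DifferentiableOn ℂ G U := hF₁d.sub hF₂d
  have haτ : ∀ τ : ℍ, a (τ : ℂ) = (f₁ τ).im := by
    intro τ; rw [ha]; simp only []; rw [hF₁ τ, UpperHalfPlane.coe_im]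
  have hbτ : ∀ τ : ℍ, b (τ : ℂ) = (f₂ τ).im := by
    intro τ; rw [hb]; simp only []; rw [hF₂ τ, UpperHalfPlane.coe_im]
  have hGτ : ∀ τ : ℍ, G (τ : ℂ) = ((f₁ τ : ℍ) : ℂ) - ((f₂ τ : ℍ) : ℂ) := by
    intro τ; rw [hG]; simp only []; rw [hF₁ τ, hF₂ τ]
  have hapos : ∀ z ∈ U, 0 < a z := by
    intro z hz
    have h2 : a z = (f₁ (⟨z, hz⟩ : ℍ)).im := haτ ⟨z, hz⟩
    rw [h2]; exact (f₁ _).2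
  have hbpos : ∀ z ∈ U, 0 < b z := by
    intro z hz
    have h2 : b z = (f₂ (⟨z, hz⟩ : ℍ)).im := hbτ ⟨z, hz⟩
    rw [h2]; exact (f₂ _).2
  -- the fundamental bound and the equality at τ₀
  have hseq : s = dist ((f₁ τ₀ : ℍ) : ℂ) ((f₂ τ₀ : ℍ) : ℂ)
      / (2 * Real.sqrt ((f₁ τ₀).im * (f₂ τ₀).im)) := by
    rw [hs, hu]
    simp only []
    rw [UpperHalfPlane.dist_eq (f₁ τ₀) (f₂ τ₀),
      mul_div_cancel_left₀ _ (two_ne_zero : (2:ℝ) ≠ 0), Real.sinh_arsinh]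
  have hbound : ∀ τ : ℍ, ‖G (τ : ℂ)‖ ≤ 2 * s * Real.sqrt (a ↑τ * b ↑τ) := by
    intro τ
    have h := hmax τ
    rw [hu] at h
    simp only [] at h
    rw [UpperHalfPlane.dist_eq (f₁ τ) (f₂ τ), UpperHalfPlane.dist_eq (f₁ τ₀) (f₂ τ₀)] at h
    have h2 : Real.arsinh
        (dist ((f₁ τ : ℍ) : ℂ) ((f₂ τ : ℍ) : ℂ) / (2 * Real.sqrt ((f₁ τ).im * (f₂ τ).im)))
        ≤ Real.arsinh
        (dist ((f₁ τ₀ : ℍ) : ℂ) ((f₂ τ₀ : ℍ) : ℂ) / (2 * Real.sqrt ((f₁ τ₀).im * (f₂ τ₀).im))) :=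
      by linarith
    have h3 := Real.arsinh_le_arsinh.mp h2
    rw [← hseq] at h3
    have hsq : 0 < Real.sqrt ((f₁ τ).im * (f₂ τ).im) :=
      Real.sqrt_pos.mpr (mul_pos (f₁ τ).2 (f₂ τ).2)
    rw [div_le_iff₀ (by positivity)] at h3
    calc ‖G ↑τ‖ = dist ((f₁ τ : ℍ) : ℂ) ((f₂ τ : ℍ) : ℂ) := by
          rw [hGτ τ, Complex.dist_eq]
      _ ≤ s * (2 * Real.sqrt ((f₁ τ).im * (f₂ τ).im)) := h3
      _ = 2 * s * Real.sqrt (a ↑τ * b ↑τ) := by rw [haτ τ, hbτ τ]; ring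
  have heq₀ : ‖G (τ₀ : ℂ)‖ = 2 * s * Real.sqrt (a ↑τ₀ * b ↑τ₀) := by
    have hsq : 0 < Real.sqrt ((f₁ τ₀).im * (f₂ τ₀).im) :=
      Real.sqrt_pos.mpr (mul_pos (f₁ τ₀).2 (f₂ τ₀).2)
    have hd : dist ((f₁ τ₀ : ℍ) : ℂ) ((f₂ τ₀ : ℍ) : ℂ)
        = s * (2 * Real.sqrt ((f₁ τ₀).im * (f₂ τ₀).im)) := by
      rw [hseq]; field_simp
    calc ‖G ↑τ₀‖ = dist ((f₁ τ₀ : ℍ) : ℂ) ((f₂ τ₀ : ℍ) : ℂ) := by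
          rw [hGτ τ₀, Complex.dist_eq]
      _ = s * (2 * Real.sqrt ((f₁ τ₀).im * (f₂ τ₀).im)) := hd
      _ = 2 * s * Real.sqrt (a ↑τ₀ * b ↑τ₀) := by rw [haτ τ₀, hbτ τ₀]; ring
  have hboundU : ∀ z ∈ U, ‖G z‖ ≤ 2 * s * Real.sqrt (a z * b z) :=
    fun z hz => hbound ⟨z, hz⟩
  -- the key circle-average rigidity statement
  have key : ∀ z, ∀ _ : z ∈ U, ‖G z‖ = 2 * s * Real.sqrt (a z * b z) →
      ∃ r > 0, Metric.ball z r ⊆ U ∧ ∀ w ∈ Metric.ball z r,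
        ‖G w‖ = 2 * s * Real.sqrt (a w * b w) ∧
        (starRingEnd ℂ) (G z) * G w
          = ((‖G z‖ * ‖G w‖ : ℝ) : ℂ) := by
    intro z hz hzeq
    obtain ⟨ε, hεpos, hεsub⟩ := Metric.isOpen_iff.mp hUopen z hz
    refine ⟨ε/2, by positivity, (Metric.ball_subset_ball (by linarith)).trans hεsub, ?_⟩
    have hcb : Metric.closedBall z (ε/2) ⊆ U :=
      (Metric.closedBall_subset_ball (by linarith)).trans hεsub
    have hazpos := hapos z hz
    have hbzpos := hbpos z hz
    have hsqz : 0 < Real.sqrt (a z * b z) := Real.sqrt_pos.mpr (mul_pos hazpos hbzpos)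
    have hC : 0 < ‖G z‖ := by rw [hzeq]; positivity
    have hc₀ne : G z ≠ 0 := by
      intro h0; rw [h0] at hC; simp at hC
    set t := Real.sqrt (b z / a z) with ht
    have htpos : 0 < t := Real.sqrt_pos.mpr (by positivity)
    have h1 : t * a z = Real.sqrt (a z * b z) := by
      rw [ht]
      nth_rewrite 2 [show a z = Real.sqrt ((a z)^2) from (Real.sqrt_sq hazpos.le).symm]
      rw [← Real.sqrt_mul (by positivity : (0:ℝ) ≤ b z / a z)]
      congr 1
      field_simp
    have h2 : b z / t = Real.sqrt (a z * b z) := by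
      have hst : Real.sqrt (a z * b z) * t = b z := by
        rw [ht, ← Real.sqrt_mul (by positivity : (0:ℝ) ≤ a z * b z),
          show a z * b z * (b z / a z) = (b z)^2 from by field_simp,
          Real.sqrt_sq hbzpos.le]
      rw [div_eq_iff htpos.ne']
      exact hst.symm
    intro w hw
    rcases eq_or_ne w z with rfl | hne
    · refine ⟨hzeq, ?_⟩
      rw [mul_comm, Complex.mul_conj, Complex.normSq_eq_norm_sq]
      push_cast; ring
    · set r' := dist w z with hr'
      have hr'pos : 0 < r' := dist_pos.mpr hne
      have hr'lt : r' < ε/2 := hw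
      have hcb' : Metric.closedBall z r' ⊆ U :=
        (Metric.closedBall_subset_closedBall hr'lt.le).trans hcb
      have hcircU : ∀ θ : ℝ, circleMap z r' θ ∈ U := by
        intro θ
        apply hcb'
        rw [Metric.mem_closedBall, Complex.dist_eq, circleMap_sub_center, norm_circleMap_zero,
          abs_of_pos hr'pos]
      have hcmcont := continuous_circleMap z r'
      have hF₁c : Continuous fun θ => F₁ (circleMap z r' θ) :=
        hF₁d.continuousOn.comp_continuous hcmcont hcircU
      have hF₂c : Continuous fun θ => F₂ (circleMap z r' θ) :=
        hF₂d.continuousOn.comp_continuous hcmcont hcircU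
      have hGc : Continuous fun θ => G (circleMap z r' θ) := by
        rw [hG]; exact hF₁c.sub hF₂c
      have hac : Continuous fun θ => a (circleMap z r' θ) := by
        rw [ha]; exact Complex.continuous_im.comp hF₁c
      have hbc : Continuous fun θ => b (circleMap z r' θ) := by
        rw [hb]; exact Complex.continuous_im.comp hF₂c
      set p : ℝ → ℝ := fun θ => ((starRingEnd ℂ) (G z) * G (circleMap z r' θ)).re with hp
      have hpc : Continuous p := Complex.continuous_re.comp (continuous_const.mul hGc)
      set C := ‖G z‖ with hCdef
      set h : ℝ → ℝ :=
        fun θ => C * s * (t * a (circleMap z r' θ) + b (circleMap z r' θ) / t) - p θ with hh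
      have hXc : Continuous fun θ => t * a (circleMap z r' θ) + b (circleMap z r' θ) / t :=
        (continuous_const.mul hac).add (hbc.div_const t)
      have hhc : Continuous h := (continuous_const.mul hXc).sub hpc
      have hnn : ∀ θ, 0 ≤ h θ := by
        intro θ
        have hw'U := hcircU θ
        set w' := circleMap z r' θ with hw'
        have e1 : p θ ≤ C * ‖G w'‖ := by
          calc p θ ≤ ‖(starRingEnd ℂ) (G z) * G w'‖ := Complex.re_le_norm _
            _ = C * ‖G w'‖ := by rw [norm_mul, Complex.norm_conj]
        have e2 : ‖G w'‖ ≤ 2 * s * Real.sqrt (a w' * b w') := hboundU w' hw'U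
        have e3 : 2 * Real.sqrt (a w' * b w') ≤ t * a w' + b w' / t := by
          have hA := Real.sq_sqrt (hapos w' hw'U).le
          have hB := Real.sq_sqrt (hbpos w' hw'U).le
          have hgm := UniqHelp.amgm (A := Real.sqrt (a w')) (B := Real.sqrt (b w')) htpos
          rw [hA, hB] at hgm
          rw [Real.sqrt_mul (hapos w' hw'U).le]
          linarith
        simp only [hh]
        nlinarith [mul_le_mul_of_nonneg_left e2 hC.le,
          mul_le_mul_of_nonneg_left e3 (mul_nonneg hC.le hspos.le), e1]
      have hper : Function.Periodic h (2*Real.pi) := by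
        intro θ
        simp only [hh, hp, periodic_circleMap z r' θ]
      -- integrability
      have hIF₁ : IntervalIntegrable (fun θ => F₁ (circleMap z r' θ))
          MeasureTheory.volume 0 (2*Real.pi) := hF₁c.intervalIntegrable _ _
      have hIF₂ : IntervalIntegrable (fun θ => F₂ (circleMap z r' θ))
          MeasureTheory.volume 0 (2*Real.pi) := hF₂c.intervalIntegrable _ _
      have hIconjG : IntervalIntegrable (fun θ => (starRingEnd ℂ) (G z) * G (circleMap z r' θ))
          MeasureTheory.volume 0 (2*Real.pi) := (continuous_const.mul hGc).intervalIntegrable _ _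
      have hIp : IntervalIntegrable p MeasureTheory.volume 0 (2*Real.pi) :=
        hpc.intervalIntegrable _ _
      have hIta : IntervalIntegrable (fun θ => t * a (circleMap z r' θ))
          MeasureTheory.volume 0 (2*Real.pi) := (continuous_const.mul hac).intervalIntegrable _ _
      have hIbt : IntervalIntegrable (fun θ => b (circleMap z r' θ) / t)
          MeasureTheory.volume 0 (2*Real.pi) := (hbc.div_const t).intervalIntegrable _ _
      have hIall : IntervalIntegrable
          (fun θ => C * s * (t * a (circleMap z r' θ) + b (circleMap z r' θ) / t))
          MeasureTheory.volume 0 (2*Real.pi) := (continuous_const.mul hXc).intervalIntegrable _ _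
      -- mean values
      have imean : (∫ θ in (0:ℝ)..(2*Real.pi), a (circleMap z r' θ)) = 2*Real.pi * a z := by
        have hm := UniqHelp.circle_mean hr'pos hF₁d hcb'
        have h2 : (∫ θ in (0:ℝ)..(2*Real.pi), a (circleMap z r' θ))
            = Complex.imCLM (∫ θ in (0:ℝ)..(2*Real.pi), F₁ (circleMap z r' θ)) := by
          rw [← Complex.imCLM.intervalIntegral_comp_comm hIF₁]
          rfl
        rw [h2, hm]
        simp [ha]
      have bmean : (∫ θ in (0:ℝ)..(2*Real.pi), b (circleMap z r' θ)) = 2*Real.pi * b z := by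
        have hm := UniqHelp.circle_mean hr'pos hF₂d hcb'
        have h2 : (∫ θ in (0:ℝ)..(2*Real.pi), b (circleMap z r' θ))
            = Complex.imCLM (∫ θ in (0:ℝ)..(2*Real.pi), F₂ (circleMap z r' θ)) := by
          rw [← Complex.imCLM.intervalIntegral_comp_comm hIF₂]
          rfl
        rw [h2, hm]
        simp [hb]
      have pmean : (∫ θ in (0:ℝ)..(2*Real.pi), p θ) = 2*Real.pi * C^2 := by
        have h2 : (∫ θ in (0:ℝ)..(2*Real.pi), p θ)
            = Complex.reCLM (∫ θ in (0:ℝ)..(2*Real.pi),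
                (starRingEnd ℂ) (G z) * G (circleMap z r' θ)) := by
          rw [← Complex.reCLM.intervalIntegral_comp_comm hIconjG]
          rfl
        rw [h2, intervalIntegral.integral_const_mul, UniqHelp.circle_mean hr'pos hGd hcb']
        have h3 : (starRingEnd ℂ) (G z) * (((2*Real.pi:ℝ):ℂ) * G z)
            = ((2*Real.pi * C^2 : ℝ) : ℂ) := by
          rw [show (starRingEnd ℂ) (G z) * (((2*Real.pi:ℝ):ℂ) * G z)
              = ((2*Real.pi:ℝ):ℂ) * (G z * (starRingEnd ℂ) (G z)) from by ring,
            Complex.mul_conj, Complex.normSq_eq_norm_sq]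
          push_cast
          ring
        rw [h3]
        simp only [Complex.reCLM_apply, Complex.ofReal_re]
      have hint0 : (∫ θ in (0:ℝ)..(2*Real.pi), h θ) = 0 := by
        have hsplit : (∫ θ in (0:ℝ)..(2*Real.pi), h θ)
            = C * s * (t * (∫ θ in (0:ℝ)..(2*Real.pi), a (circleMap z r' θ))
              + (∫ θ in (0:ℝ)..(2*Real.pi), b (circleMap z r' θ)) / t)
              - (∫ θ in (0:ℝ)..(2*Real.pi), p θ) := by
          simp only [hh]
          rw [intervalIntegral.integral_sub hIall hIp]
          congr 1
          rw [intervalIntegral.integral_const_mul]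
          congr 1
          rw [intervalIntegral.integral_add hIta hIbt, intervalIntegral.integral_const_mul,
            intervalIntegral.integral_div]
        rw [hsplit, imean, bmean, pmean,
          show t * (2*Real.pi * a z) = 2*Real.pi * (t * a z) from by ring, h1,
          show (2*Real.pi * b z) / t = 2*Real.pi * (b z / t) from by ring, h2, hzeq]
        ring
      have hzero := UniqHelp.zero_of_integral_zero hhc hnn hper hint0
      have hcm : circleMap z r' (Complex.arg (w - z)) = w := by
        simp only [circleMap]
        rw [hr', Complex.dist_eq, Complex.norm_mul_exp_arg_mul_I]
        ring
      have hzw := hzero (Complex.arg (w - z))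
      simp only [hh, hp, hcm] at hzw
      have hwU : w ∈ U := hεsub (Metric.ball_subset_ball (by linarith) hw)
      have e1 : ((starRingEnd ℂ) (G z) * G w).re ≤ C * ‖G w‖ := by
        calc ((starRingEnd ℂ) (G z) * G w).re
            ≤ ‖(starRingEnd ℂ) (G z) * G w‖ := Complex.re_le_norm _
          _ = C * ‖G w‖ := by rw [norm_mul, Complex.norm_conj]
      have e2 : ‖G w‖ ≤ 2 * s * Real.sqrt (a w * b w) := hboundU w hwU
      have e3 : 2 * Real.sqrt (a w * b w) ≤ t * a w + b w / t := by
        have hA := Real.sq_sqrt (hapos w hwU).le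
        have hB := Real.sq_sqrt (hbpos w hwU).le
        have hgm := UniqHelp.amgm (A := Real.sqrt (a w)) (B := Real.sqrt (b w)) htpos
        rw [hA, hB] at hgm
        rw [Real.sqrt_mul (hapos w hwU).le]
        linarith
      have k1 : C * ‖G w‖ ≤ C * (2*s*Real.sqrt (a w * b w)) :=
        mul_le_mul_of_nonneg_left e2 hC.le
      have k2 : C * (2*s*Real.sqrt (a w * b w)) ≤ C * s * (t * a w + b w / t) := by
        nlinarith [mul_le_mul_of_nonneg_left e3 (mul_nonneg hC.le hspos.le)]
      have k3 : C * s * (t * a w + b w / t) = ((starRingEnd ℂ) (G z) * G w).re := by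
        linarith [hzw]
      have eA : ‖G w‖ = 2 * s * Real.sqrt (a w * b w) := by
        have k4 : C * ‖G w‖ = C * (2*s*Real.sqrt (a w * b w)) :=
          le_antisymm k1 (by linarith)
        exact mul_left_cancel₀ hC.ne' k4
      have eB : (starRingEnd ℂ) (G z) * G w = ((C * ‖G w‖ : ℝ) : ℂ) := by
        have hre : ((starRingEnd ℂ) (G z) * G w).re
            = ‖(starRingEnd ℂ) (G z) * G w‖ := by
          rw [norm_mul, Complex.norm_conj]
          linarith
        have hq := UniqHelp.eq_ofReal_abs hre
        rw [hq, norm_mul, Complex.norm_conj]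
      exact ⟨eA, eB⟩
  -- clopen argument for the equality set
  haveI hpre : PreconnectedSpace ℍ := inferInstance
  have hGcoe : Continuous fun τ : ℍ => G (τ:ℂ) :=
    hGd.continuousOn.comp_continuous continuous_coe hmemU
  have hacoe : Continuous fun τ : ℍ => a (τ:ℂ) := by
    rw [ha]; exact Complex.continuous_im.comp (hF₁d.continuousOn.comp_continuous continuous_coe hmemU)
  have hbcoe : Continuous fun τ : ℍ => b (τ:ℂ) := by
    rw [hb]; exact Complex.continuous_im.comp (hF₂d.continuousOn.comp_continuous continuous_coe hmemU)
  set S : Set ℍ := {τ : ℍ | ‖G (τ:ℂ)‖ = 2*s*Real.sqrt (a ↑τ * b ↑τ)} with hSdef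
  have hSclosed : IsClosed S :=
    isClosed_eq (continuous_norm.comp hGcoe)
      (continuous_const.mul (Real.continuous_sqrt.comp (hacoe.mul hbcoe)))
  have hSopen : IsOpen S := by
    rw [isOpen_iff_mem_nhds]
    intro τ hτ
    obtain ⟨r, hrpos, hrsub, hrkey⟩ := key ↑τ (hmemU τ) hτ
    have hballmem : (fun σ : ℍ => (σ:ℂ)) ⁻¹' (Metric.ball (↑τ:ℂ) r) ∈ nhds τ :=
      continuous_coe.continuousAt.preimage_mem_nhds (Metric.ball_mem_nhds _ hrpos)
    apply Filter.mem_of_superset hballmem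
    intro σ hσ
    exact (hrkey _ hσ).1
  have hSall : ∀ τ : ℍ, ‖G (τ:ℂ)‖ = 2*s*Real.sqrt (a ↑τ * b ↑τ) := by
    have huniv : S = Set.univ := IsClopen.eq_univ ⟨hSclosed, hSopen⟩ ⟨τ₀, heq₀⟩
    intro τ
    have : τ ∈ S := by rw [huniv]; trivial
    exact this
  have hGne : ∀ τ : ℍ, G (τ:ℂ) ≠ 0 := by
    intro τ h0
    have := hSall τ
    rw [h0] at this
    have hpos : 0 < 2*s*Real.sqrt (a ↑τ * b ↑τ) := by
      have := Real.sqrt_pos.mpr (mul_pos (hapos _ (hmemU τ)) (hbpos _ (hmemU τ)))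
      positivity
    rw [← this] at hpos
    simp at hpos
  -- phase is locally constant, hence constant
  set e : ℍ → ℂ := fun τ => G ↑τ / ((‖G ↑τ‖ : ℝ) : ℂ) with he
  have habsne : ∀ τ : ℍ, ((‖G (τ:ℂ)‖ : ℝ) : ℂ) ≠ 0 := by
    intro τ
    simp only [ne_eq, Complex.ofReal_eq_zero]
    exact (norm_ne_zero_iff.mpr (hGne τ))
  have hecont : Continuous e := by
    rw [he]
    exact hGcoe.div (Complex.continuous_ofReal.comp (continuous_norm.comp hGcoe))
      habsne
  set S2 : Set ℍ := {τ : ℍ | e τ = e τ₀} with hS2def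
  have hS2closed : IsClosed S2 := isClosed_eq hecont continuous_const
  have hS2open : IsOpen S2 := by
    rw [isOpen_iff_mem_nhds]
    intro τ hτ
    obtain ⟨r, hrpos, hrsub, hrkey⟩ := key ↑τ (hmemU τ) (hSall τ)
    have hballmem : (fun σ : ℍ => (σ:ℂ)) ⁻¹' (Metric.ball (↑τ:ℂ) r) ∈ nhds τ :=
      continuous_coe.continuousAt.preimage_mem_nhds (Metric.ball_mem_nhds _ hrpos)
    apply Filter.mem_of_superset hballmem
    intro σ hσ
    have h₁ := (hrkey _ hσ).2
    have hconjne : (starRingEnd ℂ) (G (↑τ:ℂ)) ≠ 0 := by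
      rw [starRingEnd_apply]
      exact star_ne_zero.mpr (hGne τ)
    have hcross : G ↑σ * ((‖G (↑τ:ℂ)‖ : ℝ) : ℂ)
        = G ↑τ * ((‖G (↑σ:ℂ)‖ : ℝ) : ℂ) := by
      apply mul_left_cancel₀ hconjne
      rw [← mul_assoc, h₁, ← mul_assoc,
        mul_comm ((starRingEnd ℂ) (G ↑τ)) (G ↑τ), Complex.mul_conj, Complex.normSq_eq_norm_sq]
      push_cast
      ring
    have hστ : e σ = e τ := by
      rw [he]
      simp only []
      rw [div_eq_div_iff (habsne σ) (habsne τ)]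
      exact hcross
    show e σ = e τ₀
    rw [hστ]
    exact hτ
  have hS2all : ∀ τ : ℍ, e τ = e τ₀ := by
    have huniv : S2 = Set.univ := IsClopen.eq_univ ⟨hS2closed, hS2open⟩ ⟨τ₀, rfl⟩
    intro τ
    have : τ ∈ S2 := by rw [huniv]; trivial
    exact this
  have habse₀ : ‖e τ₀‖ = 1 := by
    rw [he]
    simp only []
    rw [norm_div, Complex.norm_real, Real.norm_eq_abs, abs_of_nonneg (norm_nonneg _),
      div_self (norm_ne_zero_iff.mpr (hGne τ₀))]
  have hGform : ∀ τ : ℍ, G (τ:ℂ) = ((‖G (τ:ℂ)‖ : ℝ) : ℂ) * e τ₀ := by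
    intro τ
    have h₂ : G (τ:ℂ) / ((‖G (τ:ℂ)‖ : ℝ) : ℂ) = e τ₀ := hS2all τ
    rw [div_eq_iff (habsne τ)] at h₂
    exact h₂.trans (mul_comm _ _)
  have hgreal : ∀ z ∈ U, ((starRingEnd ℂ) (e τ₀) * G z).im = 0 := by
    intro z hz
    have h₁ : G z = ((‖G z‖ : ℝ) : ℂ) * e τ₀ := hGform ⟨z, hz⟩
    rw [h₁,
      show (starRingEnd ℂ) (e τ₀) * (((‖G z‖ : ℝ) : ℂ) * e τ₀)
        = ((‖G z‖ : ℝ) : ℂ) * (e τ₀ * (starRingEnd ℂ) (e τ₀)) from by ring,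
      Complex.mul_conj, Complex.normSq_eq_norm_sq, habse₀]
    simp
  have hgd : DifferentiableOn ℂ (fun z => (starRingEnd ℂ) (e τ₀) * G z) U := hGd.const_mul _
  have he₀ne : (starRingEnd ℂ) (e τ₀) ≠ 0 := by
    rw [starRingEnd_apply]
    apply star_ne_zero.mpr
    intro h0
    rw [h0] at habse₀
    simp at habse₀
  have hGconst : ∀ z ∈ U, G z = G ↑τ₀ := by
    intro z hz
    have h₁ := UniqHelp.const_of_real hgd hgreal z hz ↑τ₀ (hmemU τ₀)
    exact mul_left_cancel₀ he₀ne h₁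
  have hcabs : 0 < ‖G (τ₀:ℂ)‖ := by
    exact (norm_pos_iff.mpr (hGne τ₀))
  set K := (‖G (τ₀:ℂ)‖ / (2*s))^2 with hK
  have hKpos : 0 < K := by positivity
  have habK : ∀ z ∈ U, a z * b z = K := by
    intro z hz
    have h₁ : ‖G z‖ = 2*s*Real.sqrt (a z * b z) := hSall ⟨z, hz⟩
    rw [hGconst z hz] at h₁
    have h₂ : Real.sqrt (a z * b z) = ‖G (τ₀:ℂ)‖ / (2*s) := by
      rw [h₁]; field_simp
    calc a z * b z = Real.sqrt (a z * b z) ^ 2 :=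
          (Real.sq_sqrt (mul_pos (hapos z hz) (hbpos z hz)).le).symm
      _ = K := by rw [h₂, hK]
  have hbz : ∀ z ∈ U, b z = a z - (G (τ₀:ℂ)).im := by
    intro z hz
    have h₁ : F₂ z = F₁ z - G z := by rw [hG]; ring
    rw [hb]
    simp only []
    rw [h₁, hGconst z hz, Complex.sub_im]
  have haconst : ∀ z ∈ U, a z = a (↑τ₀:ℂ) := by
    intro z hz
    have h₁ := habK z hz
    rw [hbz z hz] at h₁
    have h₂ := habK ↑τ₀ (hmemU τ₀)
    rw [hbz ↑τ₀ (hmemU τ₀)] at h₂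
    have hfac : (a z - a (↑τ₀:ℂ)) * (a z + a (↑τ₀:ℂ) - (G (τ₀:ℂ)).im) = 0 := by
      linear_combination h₁ - h₂
    have hbpos' := hbpos z hz
    rw [hbz z hz] at hbpos'
    have hapos₀ := hapos ↑τ₀ (hmemU τ₀)
    rcases mul_eq_zero.mp hfac with h' | h'
    · linarith [sub_eq_zero.mp h']
    · linarith
  have hF₁real : ∀ z ∈ U,
      ((fun z => F₁ z - ((a ((τ₀:ℂ)) : ℝ) : ℂ) * Complex.I) z).im = 0 := by
    intro z hz
    have h₁ : (F₁ z - ((a ((τ₀:ℂ)) : ℝ) : ℂ) * Complex.I).im = a z - a (↑τ₀:ℂ) := by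
      rw [Complex.sub_im, Complex.mul_im]
      simp [ha]
    rw [h₁, haconst z hz]
    ring
  have hF₁d' : DifferentiableOn ℂ (fun z => F₁ z - ((a ((τ₀:ℂ)) : ℝ) : ℂ) * Complex.I) U :=
    hF₁d.sub_const _
  have hF₁const := UniqHelp.const_of_real hF₁d' hF₁real
  obtain ⟨τ, τ', hττ'⟩ := hnc₁
  apply hττ'
  apply UpperHalfPlane.ext
  rw [← hF₁ τ, ← hF₁ τ']
  have h₁ := hF₁const ↑τ (hmemU τ) ↑τ' (hmemU τ')
  exact sub_left_inj.mp h₁
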